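/- The case a = 0 of the subset identity: for pairwise distinct complex numbers λ_1,...,λ_n, nonzero h with λ_i − λ_j ± h ≠ 0 for i ≠ j, and any 1 ≤ k ≤ n−1, the sum over all k-element subsets K of {1,...,n} of ∏_{i∈K, j∉K} 1/((λ_i − λ_j)(λ_i − λ_j + h)) equals the sum over all k-element subsets K of ∏_{i∈K, j∉K} 1/((λ_i − λ_j)(λ_i − λ_j − h)). -/

import Mathlib

open Finset Polynomial

set_option linter.unusedSectionVars false

namespace TodaAux

variable {ι : Type*} [DecidableEq ι]

noncomputable def vv (lam : ι → ℂ) (h : ℂ) (i j : ι) : ℂ :=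
  ((lam i - lam j) * (lam i - lam j + h))⁻¹

noncomputable def tri (lam : ι → ℂ) (h : ℂ) (j : ι) : Polynomial ℂ :=
  (X - C (lam j)) * ((X - C (lam j - h)) * (X - C (lam j + h)))

noncomputable def gco (lam : ι → ℂ) (h : ℂ) (S : Finset ι) (p : ι) (K : Finset ι) : ℂ :=
  if p ∈ K then ∏ i ∈ K.erase p, ∏ j ∈ S \ K, vv lam h i j
  else ∏ i ∈ K, ∏ j ∈ (S \ K).erase p, vv lam h i j

noncomputable def cpoly (lam : ι → ℂ) (h : ℂ) (S : Finset ι) (p : ι) (K : Finset ι) :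
    Polynomial ℂ :=
  if p ∈ K then (∏ j ∈ S \ K, (X - C (lam j + h))) * ∏ j ∈ K.erase p, tri lam h j
  else (∏ i ∈ K, (X - C (lam i - h))) * ∏ j ∈ (S \ K).erase p, tri lam h j

noncomputable def Dval (lam : ι → ℂ) (h : ℂ) (S : Finset ι) (p : ι) : ℂ :=
  ∏ j ∈ S.erase p, ((lam p - lam j) * ((lam p - lam j + h) * (lam p - lam j - h)))

lemma tri_eval (lam : ι → ℂ) (h : ℂ) (j : ι) (a : ℂ) :
    eval a (tri lam h j) = (a - lam j) * ((a - (lam j - h)) * (a - (lam j + h))) := by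
  simp [tri]

lemma tri_natDegree_le (lam : ι → ℂ) (h : ℂ) (j : ι) : (tri lam h j).natDegree ≤ 3 := by
  unfold tri
  refine le_trans natDegree_mul_le ?_
  have h2 := natDegree_mul_le (p := X - C (lam j - h)) (q := X - C (lam j + h))
  have a1 : (X - C (lam j)).natDegree ≤ 1 := natDegree_X_sub_C_le _
  have a2 : (X - C (lam j - h)).natDegree ≤ 1 := natDegree_X_sub_C_le _
  have a3 : (X - C (lam j + h)).natDegree ≤ 1 := natDegree_X_sub_C_le _
  omega

lemma Dval_neg (lam : ι → ℂ) (h : ℂ) (S : Finset ι) (p : ι) :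
    Dval lam (-h) S p = Dval lam h S p := by
  unfold Dval
  exact prod_congr rfl fun j _ => by ring

end TodaAux

namespace TodaAux

variable {ι : Type*} [DecidableEq ι]

section SetLemmas

variable {S J : Finset ι} {p q : ι}

lemma mem_R {x : ι} : x ∈ (S.erase p).erase q ↔ x ∈ S ∧ x ≠ p ∧ x ≠ q := by
  simp only [mem_erase]; tauto

lemma sdiff_insert_p (hpS : p ∈ S) (hqS : q ∈ S) (hpq : p ≠ q)
    (hJ : J ⊆ (S.erase p).erase q) :
    S \ insert p J = insert q (((S.erase p).erase q) \ J) := by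
  ext x
  have hx : x ∈ J → x ∈ S ∧ x ≠ p ∧ x ≠ q := fun hxJ => mem_R.1 (hJ hxJ)
  simp only [mem_sdiff, mem_insert, mem_erase]
  constructor
  · rintro ⟨hxS, hnot⟩
    push_neg at hnot
    by_cases hxq : x = q
    · exact Or.inl hxq
    · exact Or.inr ⟨⟨hxq, hnot.1, hxS⟩, hnot.2⟩
  · rintro (rfl | ⟨⟨hxq, hxp, hxS⟩, hxJ⟩)
    · exact ⟨hqS, by push_neg; exact ⟨fun hc => hpq hc.symm, fun hc => (hx hc).2.2 rfl⟩⟩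
    · exact ⟨hxS, by push_neg; exact ⟨hxp, hxJ⟩⟩

lemma sdiff_insert_q (hpS : p ∈ S) (hqS : q ∈ S) (hpq : p ≠ q)
    (hJ : J ⊆ (S.erase p).erase q) :
    S \ insert q J = insert p (((S.erase p).erase q) \ J) := by
  ext x
  have hx : x ∈ J → x ∈ S ∧ x ≠ p ∧ x ≠ q := fun hxJ => mem_R.1 (hJ hxJ)
  simp only [mem_sdiff, mem_insert, mem_erase]
  constructor
  · rintro ⟨hxS, hnot⟩
    push_neg at hnot
    by_cases hxp : x = p
    · exact Or.inl hxp
    · exact Or.inr ⟨⟨hnot.1, hxp, hxS⟩, hnot.2⟩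
  · rintro (rfl | ⟨⟨hxq, hxp, hxS⟩, hxJ⟩)
    · exact ⟨hpS, by push_neg; exact ⟨hpq, fun hc => (hx hc).2.1 rfl⟩⟩
    · exact ⟨hxS, by push_neg; exact ⟨hxq, hxJ⟩⟩

lemma pJ_facts (hJ : J ⊆ (S.erase p).erase q) : p ∉ J ∧ q ∉ J :=
  ⟨fun hc => (mem_R.1 (hJ hc)).2.1 rfl, fun hc => (mem_R.1 (hJ hc)).2.2 rfl⟩

lemma q_not_mem_M : q ∉ ((S.erase p).erase q) \ J := by
  simp [mem_sdiff, mem_R]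

lemma p_not_mem_M : p ∉ ((S.erase p).erase q) \ J := by
  simp [mem_sdiff, mem_R]

end SetLemmas

end TodaAux

namespace TodaAux

variable {ι : Type*} [DecidableEq ι]

section Pel

variable (lam : ι → ℂ) (h : ℂ) (q : ι)

lemma pel1 (i : ι) (h1 : lam q - lam i ≠ 0) (h2 : lam q - lam i - h ≠ 0) :
    vv lam h i q * ((lam q - lam i) * ((lam q - (lam i - h)) * (lam q - (lam i + h))))
      = lam q - lam i + h := by
  rw [vv, show (lam i - lam q) * (lam i - lam q + h)
      = (lam q - lam i) * (lam q - lam i - h) by ring]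
  field_simp
  ring

lemma pel2 (j : ι) (h1 : lam q - lam j ≠ 0) (h2 : lam q - lam j + h ≠ 0) :
    vv lam h q j * ((lam q - lam j) * ((lam q - (lam j - h)) * (lam q - (lam j + h))))
      = lam q - lam j - h := by
  rw [vv]
  field_simp
  ring

lemma pel3 (i : ι) (h1 : lam q - lam i ≠ 0) (h2 : lam q - lam i - h ≠ 0) :
    vv lam h i q * ((lam q - h - lam i) *
        ((lam q - h - (lam i - h)) * (lam q - h - (lam i + h))))
      = lam q - lam i - 2*h := by
  rw [vv, show (lam i - lam q) * (lam i - lam q + h)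
      = (lam q - lam i) * (lam q - lam i - h) by ring]
  rw [show (lam q - h - lam i) * ((lam q - h - (lam i - h)) * (lam q - h - (lam i + h)))
      = ((lam q - lam i) * (lam q - lam i - h)) * (lam q - lam i - 2*h) by ring]
  rw [inv_mul_cancel_left₀ (mul_ne_zero h1 h2)]

lemma pel4 (j : ι) (h1 : lam q - lam j ≠ 0) (h2 : lam q - lam j + h ≠ 0) :
    vv lam h q j * ((lam q + h - lam j) *
        ((lam q + h - (lam j - h)) * (lam q + h - (lam j + h))))
      = lam q - lam j + 2*h := by
  rw [vv]
  rw [show (lam q + h - lam j) * ((lam q + h - (lam j - h)) * (lam q + h - (lam j + h)))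
      = ((lam q - lam j) * (lam q - lam j + h)) * (lam q - lam j + 2*h) by ring]
  rw [inv_mul_cancel_left₀ (mul_ne_zero h1 h2)]

end Pel

end TodaAux

namespace TodaAux

variable {ι : Type*} [DecidableEq ι]

lemma V1 (lam : ι → ℂ) (h : ℂ) (S : Finset ι) (p q : ι)
    (hpS : p ∈ S) (hqS : q ∈ S) (hpq : p ≠ q)
    (hd : ∀ i ∈ S, ∀ j ∈ S, i ≠ j → lam i - lam j ≠ 0)
    (hmh : ∀ i ∈ S, ∀ j ∈ S, i ≠ j → lam i - lam j - h ≠ 0)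
    (J : Finset ι) (hJ : J ⊆ (S.erase p).erase q) :
    gco lam h S p (insert p J) * eval (lam q) (cpoly lam h S p (insert p J))
      = (-h) * ((∏ i ∈ J, (lam q - lam i + h)) *
          ((∏ j ∈ ((S.erase p).erase q) \ J, (lam q - lam j - h)) *
            ∏ i ∈ J, ∏ j ∈ ((S.erase p).erase q) \ J, vv lam h i j)) := by
  classical
  set R := (S.erase p).erase q with hR
  set M := R \ J with hM
  obtain ⟨hpJ, hqJ⟩ := pJ_facts hJ
  have hpK : p ∈ insert p J := mem_insert_self p J
  have hKe : (insert p J).erase p = J := erase_insert hpJ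
  have hSd : S \ insert p J = insert q M := sdiff_insert_p hpS hqS hpq hJ
  have hqM : q ∉ M := q_not_mem_M
  rw [gco, cpoly, if_pos hpK, if_pos hpK, hKe, hSd]
  rw [prod_insert hqM]
  have hgco : (∏ i ∈ J, ∏ j ∈ insert q M, vv lam h i j)
      = ∏ i ∈ J, (vv lam h i q * ∏ j ∈ M, vv lam h i j) :=
    prod_congr rfl fun i _ => prod_insert hqM
  rw [hgco]
  simp only [eval_mul, eval_prod, eval_sub, eval_X, eval_C]
  have htri : ∀ i ∈ J, eval (lam q) (tri lam h i)
      = (lam q - lam i) * ((lam q - (lam i - h)) * (lam q - (lam i + h))) :=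
    fun i _ => tri_eval lam h i (lam q)
  rw [prod_congr rfl htri]
  have hfacts : ∀ i ∈ J, lam q - lam i ≠ 0 ∧ lam q - lam i - h ≠ 0 := by
    intro i hi
    obtain ⟨hiS, hip, hiq⟩ := mem_R.1 (hJ hi)
    exact ⟨hd q hqS i hiS (Ne.symm hiq), hmh q hqS i hiS (Ne.symm hiq)⟩
  have key : (∏ i ∈ J, (vv lam h i q * ∏ j ∈ M, vv lam h i j)) *
        ∏ i ∈ J, ((lam q - lam i) * ((lam q - (lam i - h)) * (lam q - (lam i + h))))
      = (∏ i ∈ J, (lam q - lam i + h)) * ∏ i ∈ J, ∏ j ∈ M, vv lam h i j := by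
    rw [← prod_mul_distrib, ← prod_mul_distrib]
    refine prod_congr rfl fun i hi => ?_
    obtain ⟨h1, h2⟩ := hfacts i hi
    rw [show vv lam h i q * (∏ j ∈ M, vv lam h i j) *
          ((lam q - lam i) * ((lam q - (lam i - h)) * (lam q - (lam i + h))))
        = (vv lam h i q * ((lam q - lam i) * ((lam q - (lam i - h)) * (lam q - (lam i + h))))) *
            ∏ j ∈ M, vv lam h i j by ring]
    rw [pel1 lam h q i h1 h2]
  have hM2 : (∏ j ∈ M, (lam q - (lam j + h))) = ∏ j ∈ M, (lam q - lam j - h) :=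
    prod_congr rfl fun j _ => by ring
  rw [hM2]
  linear_combination ((lam q - (lam q + h)) * ∏ j ∈ M, (lam q - lam j - h)) * key

end TodaAux

namespace TodaAux

variable {ι : Type*} [DecidableEq ι]

lemma V2 (lam : ι → ℂ) (h : ℂ) (S : Finset ι) (p q : ι)
    (hpS : p ∈ S) (hqS : q ∈ S) (hpq : p ≠ q)
    (hd : ∀ i ∈ S, ∀ j ∈ S, i ≠ j → lam i - lam j ≠ 0)
    (hph : ∀ i ∈ S, ∀ j ∈ S, i ≠ j → lam i - lam j + h ≠ 0)
    (J : Finset ι) (hJ : J ⊆ (S.erase p).erase q) :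
    gco lam h S p (insert q J) * eval (lam q) (cpoly lam h S p (insert q J))
      = h * ((∏ i ∈ J, (lam q - lam i + h)) *
          ((∏ j ∈ ((S.erase p).erase q) \ J, (lam q - lam j - h)) *
            ∏ i ∈ J, ∏ j ∈ ((S.erase p).erase q) \ J, vv lam h i j)) := by
  classical
  set R := (S.erase p).erase q with hR
  set M := R \ J with hM
  obtain ⟨hpJ, hqJ⟩ := pJ_facts hJ
  have hpK : p ∉ insert q J := by
    simp only [mem_insert]
    push_neg
    exact ⟨hpq, hpJ⟩
  have hSd : S \ insert q J = insert p M := sdiff_insert_q hpS hqS hpq hJ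
  have hpM : p ∉ M := p_not_mem_M
  have hErase : (S \ insert q J).erase p = M := by rw [hSd, erase_insert hpM]
  rw [gco, cpoly, if_neg hpK, if_neg hpK, hErase]
  rw [prod_insert hqJ, prod_insert hqJ]
  simp only [eval_mul, eval_prod, eval_sub, eval_X, eval_C]
  have htri : ∀ j ∈ M, eval (lam q) (tri lam h j)
      = (lam q - lam j) * ((lam q - (lam j - h)) * (lam q - (lam j + h))) :=
    fun j _ => tri_eval lam h j (lam q)
  rw [prod_congr rfl htri]
  have hfacts : ∀ j ∈ M, lam q - lam j ≠ 0 ∧ lam q - lam j + h ≠ 0 := by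
    intro j hj
    obtain ⟨hjS, hjp, hjq⟩ := mem_R.1 (mem_sdiff.1 hj).1
    exact ⟨hd q hqS j hjS (Ne.symm hjq), hph q hqS j hjS (Ne.symm hjq)⟩
  have key : (∏ j ∈ M, vv lam h q j) *
        ∏ j ∈ M, ((lam q - lam j) * ((lam q - (lam j - h)) * (lam q - (lam j + h))))
      = ∏ j ∈ M, (lam q - lam j - h) := by
    rw [← prod_mul_distrib]
    refine prod_congr rfl fun j hj => ?_
    obtain ⟨h1, h2⟩ := hfacts j hj
    exact pel2 lam h q j h1 h2
  have hJ2 : (∏ i ∈ J, (lam q - (lam i - h))) = ∏ i ∈ J, (lam q - lam i + h) :=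
    prod_congr rfl fun i _ => by ring
  rw [hJ2]
  linear_combination ((lam q - (lam q - h)) * (∏ i ∈ J, (lam q - lam i + h)) *
    ∏ i ∈ J, ∏ j ∈ M, vv lam h i j) * key

lemma V3 (lam : ι → ℂ) (h : ℂ) (S : Finset ι) (p q : ι)
    (hpS : p ∈ S) (hqS : q ∈ S) (hpq : p ≠ q)
    (hd : ∀ i ∈ S, ∀ j ∈ S, i ≠ j → lam i - lam j ≠ 0)
    (hmh : ∀ i ∈ S, ∀ j ∈ S, i ≠ j → lam i - lam j - h ≠ 0)
    (J : Finset ι) (hJ : J ⊆ (S.erase p).erase q) :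
    gco lam h S p (insert p J) * eval (lam q - h) (cpoly lam h S p (insert p J))
      = (-(2*h)) * ((∏ i ∈ J, (lam q - lam i - 2*h)) *
          ((∏ j ∈ ((S.erase p).erase q) \ J, (lam q - lam j - 2*h)) *
            ∏ i ∈ J, ∏ j ∈ ((S.erase p).erase q) \ J, vv lam h i j)) := by
  classical
  set R := (S.erase p).erase q with hR
  set M := R \ J with hM
  obtain ⟨hpJ, hqJ⟩ := pJ_facts hJ
  have hpK : p ∈ insert p J := mem_insert_self p J
  have hKe : (insert p J).erase p = J := erase_insert hpJ
  have hSd : S \ insert p J = insert q M := sdiff_insert_p hpS hqS hpq hJ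
  have hqM : q ∉ M := q_not_mem_M
  rw [gco, cpoly, if_pos hpK, if_pos hpK, hKe, hSd]
  rw [prod_insert hqM]
  have hgco : (∏ i ∈ J, ∏ j ∈ insert q M, vv lam h i j)
      = ∏ i ∈ J, (vv lam h i q * ∏ j ∈ M, vv lam h i j) :=
    prod_congr rfl fun i _ => prod_insert hqM
  rw [hgco]
  simp only [eval_mul, eval_prod, eval_sub, eval_X, eval_C]
  have htri : ∀ i ∈ J, eval (lam q - h) (tri lam h i)
      = (lam q - h - lam i) * ((lam q - h - (lam i - h)) * (lam q - h - (lam i + h))) :=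
    fun i _ => tri_eval lam h i (lam q - h)
  rw [prod_congr rfl htri]
  have hfacts : ∀ i ∈ J, lam q - lam i ≠ 0 ∧ lam q - lam i - h ≠ 0 := by
    intro i hi
    obtain ⟨hiS, hip, hiq⟩ := mem_R.1 (hJ hi)
    exact ⟨hd q hqS i hiS (Ne.symm hiq), hmh q hqS i hiS (Ne.symm hiq)⟩
  have key : (∏ i ∈ J, (vv lam h i q * ∏ j ∈ M, vv lam h i j)) *
        ∏ i ∈ J, ((lam q - h - lam i) * ((lam q - h - (lam i - h)) * (lam q - h - (lam i + h))))
      = (∏ i ∈ J, (lam q - lam i - 2*h)) * ∏ i ∈ J, ∏ j ∈ M, vv lam h i j := by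
    rw [← prod_mul_distrib, ← prod_mul_distrib]
    refine prod_congr rfl fun i hi => ?_
    obtain ⟨h1, h2⟩ := hfacts i hi
    rw [show vv lam h i q * (∏ j ∈ M, vv lam h i j) *
          ((lam q - h - lam i) * ((lam q - h - (lam i - h)) * (lam q - h - (lam i + h))))
        = (vv lam h i q * ((lam q - h - lam i) *
            ((lam q - h - (lam i - h)) * (lam q - h - (lam i + h))))) *
            ∏ j ∈ M, vv lam h i j by ring]
    rw [pel3 lam h q i h1 h2]
  have hM2 : (∏ j ∈ M, (lam q - h - (lam j + h))) = ∏ j ∈ M, (lam q - lam j - 2*h) :=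
    prod_congr rfl fun j _ => by ring
  rw [hM2]
  linear_combination ((lam q - h - (lam q + h)) * ∏ j ∈ M, (lam q - lam j - 2*h)) * key

lemma V4 (lam : ι → ℂ) (h : ℂ) (S : Finset ι) (p q : ι)
    (hpS : p ∈ S) (hqS : q ∈ S) (hpq : p ≠ q)
    (hd : ∀ i ∈ S, ∀ j ∈ S, i ≠ j → lam i - lam j ≠ 0)
    (hph : ∀ i ∈ S, ∀ j ∈ S, i ≠ j → lam i - lam j + h ≠ 0)
    (J : Finset ι) (hJ : J ⊆ (S.erase p).erase q) :
    gco lam h S p (insert q J) * eval (lam q + h) (cpoly lam h S p (insert q J))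
      = (2*h) * ((∏ i ∈ J, (lam q - lam i + 2*h)) *
          ((∏ j ∈ ((S.erase p).erase q) \ J, (lam q - lam j + 2*h)) *
            ∏ i ∈ J, ∏ j ∈ ((S.erase p).erase q) \ J, vv lam h i j)) := by
  classical
  set R := (S.erase p).erase q with hR
  set M := R \ J with hM
  obtain ⟨hpJ, hqJ⟩ := pJ_facts hJ
  have hpK : p ∉ insert q J := by
    simp only [mem_insert]
    push_neg
    exact ⟨hpq, hpJ⟩
  have hSd : S \ insert q J = insert p M := sdiff_insert_q hpS hqS hpq hJ
  have hpM : p ∉ M := p_not_mem_M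
  have hErase : (S \ insert q J).erase p = M := by rw [hSd, erase_insert hpM]
  rw [gco, cpoly, if_neg hpK, if_neg hpK, hErase]
  rw [prod_insert hqJ, prod_insert hqJ]
  simp only [eval_mul, eval_prod, eval_sub, eval_X, eval_C]
  have htri : ∀ j ∈ M, eval (lam q + h) (tri lam h j)
      = (lam q + h - lam j) * ((lam q + h - (lam j - h)) * (lam q + h - (lam j + h))) :=
    fun j _ => tri_eval lam h j (lam q + h)
  rw [prod_congr rfl htri]
  have hfacts : ∀ j ∈ M, lam q - lam j ≠ 0 ∧ lam q - lam j + h ≠ 0 := by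
    intro j hj
    obtain ⟨hjS, hjp, hjq⟩ := mem_R.1 (mem_sdiff.1 hj).1
    exact ⟨hd q hqS j hjS (Ne.symm hjq), hph q hqS j hjS (Ne.symm hjq)⟩
  have key : (∏ j ∈ M, vv lam h q j) *
        ∏ j ∈ M, ((lam q + h - lam j) * ((lam q + h - (lam j - h)) * (lam q + h - (lam j + h))))
      = ∏ j ∈ M, (lam q - lam j + 2*h) := by
    rw [← prod_mul_distrib]
    refine prod_congr rfl fun j hj => ?_
    obtain ⟨h1, h2⟩ := hfacts j hj
    exact pel4 lam h q j h1 h2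
  have hJ2 : (∏ i ∈ J, (lam q + h - (lam i - h))) = ∏ i ∈ J, (lam q - lam i + 2*h) :=
    prod_congr rfl fun i _ => by ring
  rw [hJ2]
  linear_combination ((lam q + h - (lam q - h)) * (∏ i ∈ J, (lam q - lam i + 2*h)) *
    ∏ i ∈ J, ∏ j ∈ M, vv lam h i j) * key

end TodaAux

namespace TodaAux

variable {ι : Type*} [DecidableEq ι]

lemma tri_eval_zero1 (lam : ι → ℂ) (h : ℂ) (q : ι) : eval (lam q) (tri lam h q) = 0 := by
  rw [tri_eval]; ring

lemma tri_eval_zero2 (lam : ι → ℂ) (h : ℂ) (q : ι) : eval (lam q - h) (tri lam h q) = 0 := by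
  rw [tri_eval]; ring

lemma tri_eval_zero3 (lam : ι → ℂ) (h : ℂ) (q : ι) : eval (lam q + h) (tri lam h q) = 0 := by
  rw [tri_eval]; ring

lemma zer1 (lam : ι → ℂ) (h : ℂ) (S : Finset ι) (p q : ι) (K : Finset ι)
    (hqS : q ∈ S) (hqp : q ≠ p) (hcase : (p ∈ K ∧ q ∈ K) ∨ (p ∉ K ∧ q ∉ K)) :
    eval (lam q) (cpoly lam h S p K) = 0 := by
  rcases hcase with ⟨hpK, hqK⟩ | ⟨hpK, hqK⟩
  · rw [cpoly, if_pos hpK]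
    simp only [eval_mul, eval_prod]
    exact mul_eq_zero_of_right _ (prod_eq_zero (mem_erase.2 ⟨hqp, hqK⟩) (tri_eval_zero1 lam h q))
  · rw [cpoly, if_neg hpK]
    simp only [eval_mul, eval_prod]
    exact mul_eq_zero_of_right _
      (prod_eq_zero (mem_erase.2 ⟨hqp, mem_sdiff.2 ⟨hqS, hqK⟩⟩) (tri_eval_zero1 lam h q))

lemma zer2 (lam : ι → ℂ) (h : ℂ) (S : Finset ι) (p q : ι) (K : Finset ι)
    (hqS : q ∈ S) (hqp : q ≠ p) (hcase : ¬(p ∈ K ∧ q ∉ K)) :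
    eval (lam q - h) (cpoly lam h S p K) = 0 := by
  by_cases hpK : p ∈ K
  · have hqK : q ∈ K := by tauto
    rw [cpoly, if_pos hpK]
    simp only [eval_mul, eval_prod]
    exact mul_eq_zero_of_right _ (prod_eq_zero (mem_erase.2 ⟨hqp, hqK⟩) (tri_eval_zero2 lam h q))
  · by_cases hqK : q ∈ K
    · rw [cpoly, if_neg hpK]
      simp only [eval_mul, eval_prod]
      refine mul_eq_zero_of_left (prod_eq_zero hqK ?_) _
      simp only [eval_sub, eval_X, eval_C]
      ring
    · rw [cpoly, if_neg hpK]
      simp only [eval_mul, eval_prod]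
      exact mul_eq_zero_of_right _
        (prod_eq_zero (mem_erase.2 ⟨hqp, mem_sdiff.2 ⟨hqS, hqK⟩⟩) (tri_eval_zero2 lam h q))

lemma zer3 (lam : ι → ℂ) (h : ℂ) (S : Finset ι) (p q : ι) (K : Finset ι)
    (hqS : q ∈ S) (hqp : q ≠ p) (hcase : ¬(q ∈ K ∧ p ∉ K)) :
    eval (lam q + h) (cpoly lam h S p K) = 0 := by
  by_cases hpK : p ∈ K
  · by_cases hqK : q ∈ K
    · rw [cpoly, if_pos hpK]
      simp only [eval_mul, eval_prod]
      exact mul_eq_zero_of_right _ (prod_eq_zero (mem_erase.2 ⟨hqp, hqK⟩) (tri_eval_zero3 lam h q))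
    · rw [cpoly, if_pos hpK]
      simp only [eval_mul, eval_prod]
      refine mul_eq_zero_of_left (prod_eq_zero (mem_sdiff.2 ⟨hqS, hqK⟩) ?_) _
      simp only [eval_sub, eval_X, eval_C]
      ring
  · have hqK : q ∉ K := by tauto
    rw [cpoly, if_neg hpK]
    simp only [eval_mul, eval_prod]
    exact mul_eq_zero_of_right _
      (prod_eq_zero (mem_erase.2 ⟨hqp, mem_sdiff.2 ⟨hqS, hqK⟩⟩) (tri_eval_zero3 lam h q))

end TodaAux

namespace TodaAux

variable {ι : Type*} [DecidableEq ι]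

lemma pelC1 (lam : ι → ℂ) (h : ℂ) (p j : ι) (h1 : lam p - lam j ≠ 0)
    (h2 : lam p - lam j + h ≠ 0) :
    vv lam h p j * ((lam p - lam j) * ((lam p - lam j + h) * (lam p - lam j - h)))
      = lam p - (lam j + h) := by
  rw [vv, show (lam p - lam j) * ((lam p - lam j + h) * (lam p - lam j - h))
      = ((lam p - lam j) * (lam p - lam j + h)) * (lam p - lam j - h) by ring]
  rw [inv_mul_cancel_left₀ (mul_ne_zero h1 h2)]
  ring

lemma pelC2 (lam : ι → ℂ) (h : ℂ) (p i : ι) (h1 : lam p - lam i ≠ 0)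
    (h2 : lam i - lam p + h ≠ 0) :
    vv lam h i p * ((lam p - lam i) * ((lam p - lam i + h) * (lam p - lam i - h)))
      = lam p - (lam i - h) := by
  have h2' : lam p - lam i - h ≠ 0 := fun hc => h2 (by linear_combination -hc)
  rw [vv, show (lam i - lam p) * (lam i - lam p + h)
      = (lam p - lam i) * (lam p - lam i - h) by ring]
  rw [show (lam p - lam i) * ((lam p - lam i + h) * (lam p - lam i - h))
      = ((lam p - lam i) * (lam p - lam i - h)) * (lam p - lam i + h) by ring]
  rw [inv_mul_cancel_left₀ (mul_ne_zero h1 h2')]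
  ring

lemma clearing (lam : ι → ℂ) (h : ℂ) (S : Finset ι) (p : ι) (hpS : p ∈ S)
    (hd : ∀ i ∈ S, ∀ j ∈ S, i ≠ j → lam i - lam j ≠ 0)
    (hph : ∀ i ∈ S, ∀ j ∈ S, i ≠ j → lam i - lam j + h ≠ 0)
    (K : Finset ι) (hK : K ⊆ S) :
    (∏ i ∈ K, ∏ j ∈ S \ K, vv lam h i j) * Dval lam h S p
      = gco lam h S p K * eval (lam p) (cpoly lam h S p K) := by
  classical
  by_cases hpK : p ∈ K
  · have hdis : Disjoint (S \ K) (K.erase p) :=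
      Finset.sdiff_disjoint.mono_right (erase_subset p K)
    have hun : (S \ K) ∪ K.erase p = S.erase p := by
      ext x
      simp only [mem_union, mem_sdiff, mem_erase]
      constructor
      · rintro (⟨hxS, hxK⟩ | ⟨hxp, hxK⟩)
        · exact ⟨fun hc => hxK (hc ▸ hpK), hxS⟩
        · exact ⟨hxp, hK hxK⟩
      · rintro ⟨hxp, hxS⟩
        by_cases hxK : x ∈ K
        · exact Or.inr ⟨hxp, hxK⟩
        · exact Or.inl ⟨hxS, hxK⟩
    rw [gco, cpoly, if_pos hpK, if_pos hpK]
    rw [Dval, ← hun, prod_union hdis]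
    rw [← mul_prod_erase K _ hpK]
    simp only [eval_mul, eval_prod, eval_sub, eval_X, eval_C]
    have htri : ∀ j ∈ K.erase p, eval (lam p) (tri lam h j)
        = (lam p - lam j) * ((lam p - lam j + h) * (lam p - lam j - h)) := by
      intro j hj
      rw [tri_eval]; ring
    rw [prod_congr rfl htri]
    have key1 : (∏ j ∈ S \ K, vv lam h p j) *
          ∏ j ∈ S \ K, ((lam p - lam j) * ((lam p - lam j + h) * (lam p - lam j - h)))
        = ∏ j ∈ S \ K, (lam p - (lam j + h)) := by
      rw [← prod_mul_distrib]
      refine prod_congr rfl fun j hj => ?_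
      obtain ⟨hjS, hjK⟩ := mem_sdiff.1 hj
      have hjp : p ≠ j := fun hc => hjK (hc ▸ hpK)
      exact pelC1 lam h p j (hd p hpS j hjS hjp) (hph p hpS j hjS hjp)
    linear_combination ((∏ i ∈ K.erase p, ∏ j ∈ S \ K, vv lam h i j) *
      ∏ j ∈ K.erase p, ((lam p - lam j) * ((lam p - lam j + h) * (lam p - lam j - h)))) * key1
  · have hpSK : p ∈ S \ K := mem_sdiff.2 ⟨hpS, hpK⟩
    have hdis : Disjoint K ((S \ K).erase p) :=
      Finset.disjoint_sdiff.mono_right (erase_subset p (S \ K))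
    have hun : K ∪ (S \ K).erase p = S.erase p := by
      ext x
      simp only [mem_union, mem_sdiff, mem_erase]
      constructor
      · rintro (hxK | ⟨hxp, hxS, hxK⟩)
        · exact ⟨fun hc => hpK (hc ▸ hxK), hK hxK⟩
        · exact ⟨hxp, hxS⟩
      · rintro ⟨hxp, hxS⟩
        by_cases hxK : x ∈ K
        · exact Or.inl hxK
        · exact Or.inr ⟨hxp, hxS, hxK⟩
    rw [gco, cpoly, if_neg hpK, if_neg hpK]
    rw [Dval, ← hun, prod_union hdis]
    have hsplit : (∏ i ∈ K, ∏ j ∈ S \ K, vv lam h i j)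
        = ∏ i ∈ K, (vv lam h i p * ∏ j ∈ (S \ K).erase p, vv lam h i j) :=
      prod_congr rfl fun i _ => (mul_prod_erase (S \ K) _ hpSK).symm
    rw [hsplit]
    simp only [eval_mul, eval_prod, eval_sub, eval_X, eval_C]
    have htri : ∀ j ∈ (S \ K).erase p, eval (lam p) (tri lam h j)
        = (lam p - lam j) * ((lam p - lam j + h) * (lam p - lam j - h)) := by
      intro j hj
      rw [tri_eval]; ring
    rw [prod_congr rfl htri]
    have key1 : (∏ i ∈ K, (vv lam h i p * ∏ j ∈ (S \ K).erase p, vv lam h i j)) *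
          ∏ i ∈ K, ((lam p - lam i) * ((lam p - lam i + h) * (lam p - lam i - h)))
        = (∏ i ∈ K, (lam p - (lam i - h))) *
            ∏ i ∈ K, ∏ j ∈ (S \ K).erase p, vv lam h i j := by
      rw [← prod_mul_distrib, ← prod_mul_distrib]
      refine prod_congr rfl fun i hi => ?_
      have hiS : i ∈ S := hK hi
      have hip : p ≠ i := fun hc => hpK (hc ▸ hi)
      rw [show vv lam h i p * (∏ j ∈ (S \ K).erase p, vv lam h i j) *
            ((lam p - lam i) * ((lam p - lam i + h) * (lam p - lam i - h)))
          = (vv lam h i p * ((lam p - lam i) * ((lam p - lam i + h) * (lam p - lam i - h)))) *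
              ∏ j ∈ (S \ K).erase p, vv lam h i j by ring]
      rw [pelC2 lam h p i (hd p hpS i hiS hip) (hph i hiS p hpS (Ne.symm hip))]
    linear_combination (∏ j ∈ (S \ K).erase p,
      ((lam p - lam j) * ((lam p - lam j + h) * (lam p - lam j - h)))) * key1

end TodaAux

namespace TodaAux

variable {ι : Type*} [DecidableEq ι]

section Sums

variable (lam : ι → ℂ) (h : ℂ) (S : Finset ι) (p q : ι)

lemma sumLA (hpS : p ∈ S) (hqS : q ∈ S) (hpq : p ≠ q)
    (hd : ∀ i ∈ S, ∀ j ∈ S, i ≠ j → lam i - lam j ≠ 0)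
    (hmh : ∀ i ∈ S, ∀ j ∈ S, i ≠ j → lam i - lam j - h ≠ 0)
    (k : ℕ) (hk : 1 ≤ k) :
    ∑ K ∈ S.powersetCard k, gco lam h S p K * eval (lam q - h) (cpoly lam h S p K)
      = ((-(2*h)) * ∏ r ∈ (S.erase p).erase q, (lam q - lam r - 2*h)) *
          ∑ J ∈ ((S.erase p).erase q).powersetCard (k-1),
            ∏ i ∈ J, ∏ j ∈ ((S.erase p).erase q) \ J, vv lam h i j := by
  classical
  have hzero : ∀ K ∈ S.powersetCard k,
      gco lam h S p K * eval (lam q - h) (cpoly lam h S p K) ≠ 0 → (p ∈ K ∧ q ∉ K) := by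
    intro K hK hne
    by_contra hc
    exact hne (mul_eq_zero_of_right _ (zer2 lam h S p q K hqS (Ne.symm hpq) hc))
  rw [← sum_filter_of_ne hzero, mul_sum]
  refine sum_bij' (fun K _ => K.erase p) (fun J _ => insert p J) ?_ ?_ ?_ ?_ ?_
  · intro K hK
    obtain ⟨hKm, hpK, hqK⟩ := mem_filter.1 hK
    obtain ⟨hKS, hKc⟩ := mem_powersetCard.1 hKm
    refine mem_powersetCard.2 ⟨?_, by rw [card_erase_of_mem hpK, hKc]⟩
    intro x hx
    obtain ⟨hxp, hxK⟩ := mem_erase.1 hx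
    exact mem_R.2 ⟨hKS hxK, hxp, fun hc => hqK (hc ▸ hxK)⟩
  · intro J hJ
    obtain ⟨hJR, hJc⟩ := mem_powersetCard.1 hJ
    obtain ⟨hpJ, hqJ⟩ := pJ_facts hJR
    refine mem_filter.2 ⟨mem_powersetCard.2 ⟨?_, ?_⟩, mem_insert_self p J, ?_⟩
    · exact insert_subset hpS (hJR.trans ((erase_subset q _).trans (erase_subset p S)))
    · rw [card_insert_of_notMem hpJ, hJc]; omega
    · simp only [mem_insert]
      push_neg
      exact ⟨Ne.symm hpq, hqJ⟩
  · intro K hK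
    exact insert_erase (mem_filter.1 hK).2.1
  · intro J hJ
    exact erase_insert (pJ_facts (mem_powersetCard.1 hJ).1).1
  · intro K hK
    obtain ⟨hKm, hpK, hqK⟩ := mem_filter.1 hK
    obtain ⟨hKS, hKc⟩ := mem_powersetCard.1 hKm
    have hJR : K.erase p ⊆ (S.erase p).erase q := by
      intro x hx
      obtain ⟨hxp, hxK⟩ := mem_erase.1 hx
      exact mem_R.2 ⟨hKS hxK, hxp, fun hc => hqK (hc ▸ hxK)⟩
    have hins : insert p (K.erase p) = K := insert_erase hpK
    have hV := V3 lam h S p q hpS hqS hpq hd hmh (K.erase p) hJR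
    rw [hins] at hV
    show gco lam h S p K * eval (lam q - h) (cpoly lam h S p K)
      = (-(2*h) * ∏ r ∈ (S.erase p).erase q, (lam q - lam r - 2*h)) *
        ∏ i ∈ K.erase p, ∏ j ∈ (S.erase p).erase q \ K.erase p, vv lam h i j
    rw [hV, ← prod_sdiff hJR]
    ring

lemma sumLB (hpS : p ∈ S) (hqS : q ∈ S) (hpq : p ≠ q)
    (hd : ∀ i ∈ S, ∀ j ∈ S, i ≠ j → lam i - lam j ≠ 0)
    (hph : ∀ i ∈ S, ∀ j ∈ S, i ≠ j → lam i - lam j + h ≠ 0)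
    (k : ℕ) (hk : 1 ≤ k) :
    ∑ K ∈ S.powersetCard k, gco lam h S p K * eval (lam q + h) (cpoly lam h S p K)
      = ((2*h) * ∏ r ∈ (S.erase p).erase q, (lam q - lam r + 2*h)) *
          ∑ J ∈ ((S.erase p).erase q).powersetCard (k-1),
            ∏ i ∈ J, ∏ j ∈ ((S.erase p).erase q) \ J, vv lam h i j := by
  classical
  have hzero : ∀ K ∈ S.powersetCard k,
      gco lam h S p K * eval (lam q + h) (cpoly lam h S p K) ≠ 0 → (q ∈ K ∧ p ∉ K) := by
    intro K hK hne
    by_contra hc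
    exact hne (mul_eq_zero_of_right _ (zer3 lam h S p q K hqS (Ne.symm hpq) hc))
  rw [← sum_filter_of_ne hzero, mul_sum]
  refine sum_bij' (fun K _ => K.erase q) (fun J _ => insert q J) ?_ ?_ ?_ ?_ ?_
  · intro K hK
    obtain ⟨hKm, hqK, hpK⟩ := mem_filter.1 hK
    obtain ⟨hKS, hKc⟩ := mem_powersetCard.1 hKm
    refine mem_powersetCard.2 ⟨?_, by rw [card_erase_of_mem hqK, hKc]⟩
    intro x hx
    obtain ⟨hxq, hxK⟩ := mem_erase.1 hx
    exact mem_R.2 ⟨hKS hxK, fun hc => hpK (hc ▸ hxK), hxq⟩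
  · intro J hJ
    obtain ⟨hJR, hJc⟩ := mem_powersetCard.1 hJ
    obtain ⟨hpJ, hqJ⟩ := pJ_facts hJR
    refine mem_filter.2 ⟨mem_powersetCard.2 ⟨?_, ?_⟩, mem_insert_self q J, ?_⟩
    · exact insert_subset hqS (hJR.trans ((erase_subset q _).trans (erase_subset p S)))
    · rw [card_insert_of_notMem hqJ, hJc]; omega
    · simp only [mem_insert]
      push_neg
      exact ⟨hpq, hpJ⟩
  · intro K hK
    exact insert_erase (mem_filter.1 hK).2.1
  · intro J hJ
    exact erase_insert (pJ_facts (mem_powersetCard.1 hJ).1).2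
  · intro K hK
    obtain ⟨hKm, hqK, hpK⟩ := mem_filter.1 hK
    obtain ⟨hKS, hKc⟩ := mem_powersetCard.1 hKm
    have hJR : K.erase q ⊆ (S.erase p).erase q := by
      intro x hx
      obtain ⟨hxq, hxK⟩ := mem_erase.1 hx
      exact mem_R.2 ⟨hKS hxK, fun hc => hpK (hc ▸ hxK), hxq⟩
    have hins : insert q (K.erase q) = K := insert_erase hqK
    have hV := V4 lam h S p q hpS hqS hpq hd hph (K.erase q) hJR
    rw [hins] at hV
    show gco lam h S p K * eval (lam q + h) (cpoly lam h S p K)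
      = (2*h * ∏ r ∈ (S.erase p).erase q, (lam q - lam r + 2*h)) *
        ∏ i ∈ K.erase q, ∏ j ∈ (S.erase p).erase q \ K.erase q, vv lam h i j
    rw [hV, ← prod_sdiff hJR]
    ring

lemma sumE0 (hpS : p ∈ S) (hqS : q ∈ S) (hpq : p ≠ q)
    (hd : ∀ i ∈ S, ∀ j ∈ S, i ≠ j → lam i - lam j ≠ 0)
    (hph : ∀ i ∈ S, ∀ j ∈ S, i ≠ j → lam i - lam j + h ≠ 0)
    (hmh : ∀ i ∈ S, ∀ j ∈ S, i ≠ j → lam i - lam j - h ≠ 0)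
    (k : ℕ) (hk : 1 ≤ k) :
    ∑ K ∈ S.powersetCard k, gco lam h S p K * eval (lam q) (cpoly lam h S p K) = 0 := by
  classical
  have hzero : ∀ K ∈ S.powersetCard k,
      gco lam h S p K * eval (lam q) (cpoly lam h S p K) ≠ 0 →
        ((p ∈ K ∧ q ∉ K) ∨ (q ∈ K ∧ p ∉ K)) := by
    intro K hK hne
    by_contra hc
    push_neg at hc
    refine hne (mul_eq_zero_of_right _ (zer1 lam h S p q K hqS (Ne.symm hpq) ?_))
    by_cases h1 : p ∈ K <;> by_cases h2 : q ∈ K <;> tauto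
  rw [← sum_filter_of_ne hzero, filter_or, sum_union (Finset.disjoint_left.mpr
    (fun K h1 h2 => ((mem_filter.1 h2).2.2 (mem_filter.1 h1).2.1)))]
  have hA : ∑ K ∈ (S.powersetCard k).filter (fun K => p ∈ K ∧ q ∉ K),
      gco lam h S p K * eval (lam q) (cpoly lam h S p K)
      = ∑ J ∈ ((S.erase p).erase q).powersetCard (k-1),
          (-h) * ((∏ i ∈ J, (lam q - lam i + h)) *
            ((∏ j ∈ ((S.erase p).erase q) \ J, (lam q - lam j - h)) *
              ∏ i ∈ J, ∏ j ∈ ((S.erase p).erase q) \ J, vv lam h i j)) := by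
    refine sum_bij' (fun K _ => K.erase p) (fun J _ => insert p J) ?_ ?_ ?_ ?_ ?_
    · intro K hK
      obtain ⟨hKm, hpK, hqK⟩ := mem_filter.1 hK
      obtain ⟨hKS, hKc⟩ := mem_powersetCard.1 hKm
      refine mem_powersetCard.2 ⟨?_, by rw [card_erase_of_mem hpK, hKc]⟩
      intro x hx
      obtain ⟨hxp, hxK⟩ := mem_erase.1 hx
      exact mem_R.2 ⟨hKS hxK, hxp, fun hc => hqK (hc ▸ hxK)⟩
    · intro J hJ
      obtain ⟨hJR, hJc⟩ := mem_powersetCard.1 hJ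
      obtain ⟨hpJ, hqJ⟩ := pJ_facts hJR
      refine mem_filter.2 ⟨mem_powersetCard.2 ⟨?_, ?_⟩, mem_insert_self p J, ?_⟩
      · exact insert_subset hpS (hJR.trans ((erase_subset q _).trans (erase_subset p S)))
      · rw [card_insert_of_notMem hpJ, hJc]; omega
      · simp only [mem_insert]
        push_neg
        exact ⟨Ne.symm hpq, hqJ⟩
    · intro K hK
      exact insert_erase (mem_filter.1 hK).2.1
    · intro J hJ
      exact erase_insert (pJ_facts (mem_powersetCard.1 hJ).1).1
    · intro K hK
      obtain ⟨hKm, hpK, hqK⟩ := mem_filter.1 hK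
      obtain ⟨hKS, hKc⟩ := mem_powersetCard.1 hKm
      have hJR : K.erase p ⊆ (S.erase p).erase q := by
        intro x hx
        obtain ⟨hxp, hxK⟩ := mem_erase.1 hx
        exact mem_R.2 ⟨hKS hxK, hxp, fun hc => hqK (hc ▸ hxK)⟩
      have hins : insert p (K.erase p) = K := insert_erase hpK
      have hV := V1 lam h S p q hpS hqS hpq hd hmh (K.erase p) hJR
      rw [hins] at hV
      exact hV
  have hB : ∑ K ∈ (S.powersetCard k).filter (fun K => q ∈ K ∧ p ∉ K),
      gco lam h S p K * eval (lam q) (cpoly lam h S p K)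
      = ∑ J ∈ ((S.erase p).erase q).powersetCard (k-1),
          h * ((∏ i ∈ J, (lam q - lam i + h)) *
            ((∏ j ∈ ((S.erase p).erase q) \ J, (lam q - lam j - h)) *
              ∏ i ∈ J, ∏ j ∈ ((S.erase p).erase q) \ J, vv lam h i j)) := by
    refine sum_bij' (fun K _ => K.erase q) (fun J _ => insert q J) ?_ ?_ ?_ ?_ ?_
    · intro K hK
      obtain ⟨hKm, hqK, hpK⟩ := mem_filter.1 hK
      obtain ⟨hKS, hKc⟩ := mem_powersetCard.1 hKm
      refine mem_powersetCard.2 ⟨?_, by rw [card_erase_of_mem hqK, hKc]⟩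
      intro x hx
      obtain ⟨hxq, hxK⟩ := mem_erase.1 hx
      exact mem_R.2 ⟨hKS hxK, fun hc => hpK (hc ▸ hxK), hxq⟩
    · intro J hJ
      obtain ⟨hJR, hJc⟩ := mem_powersetCard.1 hJ
      obtain ⟨hpJ, hqJ⟩ := pJ_facts hJR
      refine mem_filter.2 ⟨mem_powersetCard.2 ⟨?_, ?_⟩, mem_insert_self q J, ?_⟩
      · exact insert_subset hqS (hJR.trans ((erase_subset q _).trans (erase_subset p S)))
      · rw [card_insert_of_notMem hqJ, hJc]; omega
      · simp only [mem_insert]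
        push_neg
        exact ⟨hpq, hpJ⟩
    · intro K hK
      exact insert_erase (mem_filter.1 hK).2.1
    · intro J hJ
      exact erase_insert (pJ_facts (mem_powersetCard.1 hJ).1).2
    · intro K hK
      obtain ⟨hKm, hqK, hpK⟩ := mem_filter.1 hK
      obtain ⟨hKS, hKc⟩ := mem_powersetCard.1 hKm
      have hJR : K.erase q ⊆ (S.erase p).erase q := by
        intro x hx
        obtain ⟨hxq, hxK⟩ := mem_erase.1 hx
        exact mem_R.2 ⟨hKS hxK, fun hc => hpK (hc ▸ hxK), hxq⟩
      have hins : insert q (K.erase q) = K := insert_erase hqK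
      have hV := V2 lam h S p q hpS hqS hpq hd hph (K.erase q) hJR
      rw [hins] at hV
      exact hV
  rw [hA, hB, ← sum_add_distrib]
  refine sum_eq_zero fun J hJ => ?_
  ring

end Sums

end TodaAux

namespace TodaAux

variable {ι : Type*} [DecidableEq ι]

lemma cpoly_deg (lam : ι → ℂ) (h : ℂ) (S : Finset ι) (p : ι) (hpS : p ∈ S)
    (k : ℕ) (hk1 : 1 ≤ k) (hk2 : k < S.card) (K : Finset ι) (hK : K ⊆ S) (hKc : K.card = k) :
    (cpoly lam h S p K).natDegree < 3 * (S.card - 1) := by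
  classical
  have hsd : (S \ K).card = S.card - k := by rw [card_sdiff_of_subset hK, hKc]
  have hlin : ∀ (T : Finset ι) (f : ι → ℂ),
      (∏ j ∈ T, (X - C (f j))).natDegree ≤ T.card := by
    intro T ff
    have hb : ∀ j ∈ T, (X - C (ff j)).natDegree ≤ 1 := fun j _ => natDegree_X_sub_C_le (ff j)
    have h2 := Finset.sum_le_sum hb
    rw [sum_const, smul_eq_mul, mul_one] at h2
    exact le_trans (natDegree_prod_le _ _) h2
  have htri : ∀ T : Finset ι, (∏ j ∈ T, tri lam h j).natDegree ≤ 3 * T.card := by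
    intro T
    have hb : ∀ j ∈ T, (tri lam h j).natDegree ≤ 3 := fun j _ => tri_natDegree_le lam h j
    have h2 := Finset.sum_le_sum hb
    rw [sum_const, smul_eq_mul, mul_comm] at h2
    exact le_trans (natDegree_prod_le _ _) h2
  by_cases hpK : p ∈ K
  · have h1 : (cpoly lam h S p K).natDegree
        ≤ (S \ K).card + 3 * (K.erase p).card := by
      rw [cpoly, if_pos hpK]
      exact le_trans natDegree_mul_le (add_le_add (hlin _ _) (htri _))
    have h2 : (K.erase p).card = k - 1 := by rw [card_erase_of_mem hpK, hKc]
    omega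
  · have hpSK : p ∈ S \ K := mem_sdiff.2 ⟨hpS, hpK⟩
    have h1 : (cpoly lam h S p K).natDegree
        ≤ K.card + 3 * ((S \ K).erase p).card := by
      rw [cpoly, if_neg hpK]
      exact le_trans natDegree_mul_le (add_le_add (hlin _ _) (htri _))
    have h2 : ((S \ K).erase p).card = S.card - k - 1 := by
      rw [card_erase_of_mem hpSK, hsd]
    omega

lemma pts_card (lam : ι → ℂ) (h : ℂ) (hh : h ≠ 0) (T : Finset ι)
    (hd : ∀ i ∈ T, ∀ j ∈ T, i ≠ j → lam i - lam j ≠ 0)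
    (hph : ∀ i ∈ T, ∀ j ∈ T, i ≠ j → lam i - lam j + h ≠ 0)
    (hmh : ∀ i ∈ T, ∀ j ∈ T, i ≠ j → lam i - lam j - h ≠ 0)
    (hp2 : ∀ i ∈ T, ∀ j ∈ T, i ≠ j → lam i - lam j + 2*h ≠ 0)
    (hm2 : ∀ i ∈ T, ∀ j ∈ T, i ≠ j → lam i - lam j - 2*h ≠ 0) :
    (T.biUnion (fun q => ({lam q, lam q - h, lam q + h} : Finset ℂ))).card = 3 * T.card := by
  classical
  rw [card_biUnion]
  · have : ∀ q ∈ T, ({lam q, lam q - h, lam q + h} : Finset ℂ).card = 3 := by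
      intro q _
      rw [card_insert_of_notMem, card_insert_of_notMem, card_singleton]
      · simp only [mem_singleton]
        intro hc
        exact hh (by linear_combination -hc / 2)
      · simp only [mem_insert, mem_singleton]
        push_neg
        constructor
        · intro hc; exact hh (by linear_combination hc)
        · intro hc; exact hh (by linear_combination -hc)
    rw [sum_congr rfl this, sum_const, smul_eq_mul, mul_comm]
  · intro x hx y hy hxy
    show Disjoint ({lam x, lam x - h, lam x + h} : Finset ℂ) {lam y, lam y - h, lam y + h}
    rw [Finset.disjoint_left]
    intro a ha ha'
    simp only [mem_insert, mem_singleton] at ha ha'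
    have hxyS := hd x hx y hy hxy
    have h1 := hph x hx y hy hxy
    have h2 := hmh x hx y hy hxy
    have h3 := hp2 x hx y hy hxy
    have h4 := hm2 x hx y hy hxy
    rcases ha with rfl | rfl | rfl <;> rcases ha' with hc | hc | hc
    · exact hxyS (by linear_combination hc)
    · exact h1 (by linear_combination hc)
    · exact h2 (by linear_combination hc)
    · exact h2 (by linear_combination hc)
    · exact hxyS (by linear_combination hc)
    · exact h4 (by linear_combination hc)
    · exact h1 (by linear_combination hc)
    · exact h3 (by linear_combination hc)
    · exact hxyS (by linear_combination hc)

end TodaAux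

namespace TodaAux

variable {ι : Type*} [DecidableEq ι]

lemma keyL (lam : ι → ℂ) (h : ℂ) (hh : h ≠ 0) :
    ∀ n : ℕ, ∀ S : Finset ι, S.card ≤ n → ∀ k : ℕ, k ≤ S.card →
    (∀ i ∈ S, ∀ j ∈ S, i ≠ j → lam i - lam j ≠ 0) →
    (∀ i ∈ S, ∀ j ∈ S, i ≠ j → lam i - lam j + h ≠ 0) →
    (∀ i ∈ S, ∀ j ∈ S, i ≠ j → lam i - lam j - h ≠ 0) →
    (∀ i ∈ S, ∀ j ∈ S, i ≠ j → lam i - lam j + 2*h ≠ 0) →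
    (∀ i ∈ S, ∀ j ∈ S, i ≠ j → lam i - lam j - 2*h ≠ 0) →
    ∑ K ∈ S.powersetCard k, ∏ i ∈ K, ∏ j ∈ S \ K, vv lam h i j
      = ∑ K ∈ S.powersetCard k, ∏ i ∈ K, ∏ j ∈ S \ K, vv lam (-h) i j := by
  intro n
  induction n with
  | zero =>
    intro S hcard k hk hd hph hmh hp2 hm2
    have hk0 : k = 0 := by omega
    subst hk0
    simp [powersetCard_zero]
  | succ n IH =>
    intro S hcard k hk hd hph hmh hp2 hm2
    rcases Nat.eq_zero_or_pos k with rfl | hk1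
    · simp [powersetCard_zero]
    rcases eq_or_lt_of_le hk with rfl | hk2
    · rw [powersetCard_self]
      simp [sdiff_self]
    -- main case : 1 ≤ k < S.card
    have hS2 : 2 ≤ S.card := by omega
    obtain ⟨p, hpS⟩ : S.Nonempty := card_pos.1 (by omega)
    -- hypotheses for -h
    have hph' : ∀ i ∈ S, ∀ j ∈ S, i ≠ j → lam i - lam j + -h ≠ 0 := by
      intro i hi j hj hij hc
      exact hmh i hi j hj hij (by linear_combination hc)
    have hmh' : ∀ i ∈ S, ∀ j ∈ S, i ≠ j → lam i - lam j - -h ≠ 0 := by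
      intro i hi j hj hij hc
      exact hph i hi j hj hij (by linear_combination hc)
    have hp2' : ∀ i ∈ S, ∀ j ∈ S, i ≠ j → lam i - lam j + 2*(-h) ≠ 0 := by
      intro i hi j hj hij hc
      exact hm2 i hi j hj hij (by linear_combination hc)
    have hm2' : ∀ i ∈ S, ∀ j ∈ S, i ≠ j → lam i - lam j - 2*(-h) ≠ 0 := by
      intro i hi j hj hij hc
      exact hp2 i hi j hj hij (by linear_combination hc)
    set N : Polynomial ℂ := ∑ K ∈ S.powersetCard k,
      (C (gco lam h S p K) * cpoly lam h S p K
        - C (gco lam (-h) S p K) * cpoly lam (-h) S p K) with hNdef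
    set pts : Finset ℂ :=
      (S.erase p).biUnion (fun q => ({lam q, lam q - h, lam q + h} : Finset ℂ)) with hptsdef
    have hTsub : S.erase p ⊆ S := erase_subset p S
    have hptscard : pts.card = 3 * (S.card - 1) := by
      rw [hptsdef, pts_card lam h hh (S.erase p)
        (fun i hi j hj hij => hd i (hTsub hi) j (hTsub hj) hij) (fun i hi j hj hij => hph i (hTsub hi) j (hTsub hj) hij) (fun i hi j hj hij => hmh i (hTsub hi) j (hTsub hj) hij)
        (fun i hi j hj hij => hp2 i (hTsub hi) j (hTsub hj) hij) (fun i hi j hj hij => hm2 i (hTsub hi) j (hTsub hj) hij), card_erase_of_mem hpS]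
    -- evaluate N on pts
    have hevalN : ∀ x : ℂ, eval x N
        = (∑ K ∈ S.powersetCard k, gco lam h S p K * eval x (cpoly lam h S p K))
          - ∑ K ∈ S.powersetCard k, gco lam (-h) S p K * eval x (cpoly lam (-h) S p K) := by
      intro x
      rw [hNdef, eval_finset_sum, ← sum_sub_distrib]
      refine sum_congr rfl fun K _ => ?_
      simp [eval_sub, eval_mul, eval_C]
    have hevals : ∀ x ∈ pts, eval x N = 0 := by
      intro x hx
      rw [hptsdef] at hx
      obtain ⟨q, hqT, hxq⟩ := mem_biUnion.1 hx
      obtain ⟨hqp, hqS⟩ := mem_erase.1 hqT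
      have hpq : p ≠ q := Ne.symm hqp
      -- IH for R := (S.erase p).erase q with k-1
      have hqT' : q ∈ S.erase p := mem_erase.2 ⟨hqp, hqS⟩
      have hRsub : (S.erase p).erase q ⊆ S := (erase_subset q _).trans (erase_subset p S)
      have hRcard : ((S.erase p).erase q).card = S.card - 2 := by
        rw [card_erase_of_mem hqT', card_erase_of_mem hpS]
        omega
      have hIH : ∑ J ∈ ((S.erase p).erase q).powersetCard (k-1),
            ∏ i ∈ J, ∏ j ∈ ((S.erase p).erase q) \ J, vv lam h i j
          = ∑ J ∈ ((S.erase p).erase q).powersetCard (k-1),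
            ∏ i ∈ J, ∏ j ∈ ((S.erase p).erase q) \ J, vv lam (-h) i j := by
        refine IH _ (by omega) (k-1) (by omega) (fun i hi j hj hij => hd i (hRsub hi) j (hRsub hj) hij)
          (fun i hi j hj hij => hph i (hRsub hi) j (hRsub hj) hij) (fun i hi j hj hij => hmh i (hRsub hi) j (hRsub hj) hij)
          (fun i hi j hj hij => hp2 i (hRsub hi) j (hRsub hj) hij) (fun i hi j hj hij => hm2 i (hRsub hi) j (hRsub hj) hij)
      rw [hevalN x]
      simp only [mem_insert, mem_singleton] at hxq
      rcases hxq with rfl | rfl | rfl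
      · rw [sumE0 lam h S p q hpS hqS hpq hd hph hmh k hk1,
          sumE0 lam (-h) S p q hpS hqS hpq hd hph' hmh' k hk1, sub_zero]
      · have e1 := sumLA lam h S p q hpS hqS hpq hd hmh k hk1
        have e2 := sumLB lam (-h) S p q hpS hqS hpq hd hph' k hk1
        rw [show lam q + -h = lam q - h by ring] at e2
        have e3 : (∏ r ∈ (S.erase p).erase q, (lam q - lam r + 2*(-h)))
            = ∏ r ∈ (S.erase p).erase q, (lam q - lam r - 2*h) :=
          prod_congr rfl fun r _ => by ring
        rw [e3] at e2
        rw [e1, e2, hIH]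
        ring
      · have e1 := sumLB lam h S p q hpS hqS hpq hd hph k hk1
        have e2 := sumLA lam (-h) S p q hpS hqS hpq hd hmh' k hk1
        rw [show lam q - -h = lam q + h by ring] at e2
        have e3 : (∏ r ∈ (S.erase p).erase q, (lam q - lam r - 2*(-h)))
            = ∏ r ∈ (S.erase p).erase q, (lam q - lam r + 2*h) :=
          prod_congr rfl fun r _ => by ring
        rw [e3] at e2
        rw [e1, e2, hIH]
        ring
    -- degree bound
    have hdeg : N.natDegree < pts.card := by
      rw [hptscard]
      have hbound : ∀ K ∈ S.powersetCard k,
          (C (gco lam h S p K) * cpoly lam h S p K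
            - C (gco lam (-h) S p K) * cpoly lam (-h) S p K).natDegree
            ≤ 3 * (S.card - 1) - 1 := by
        intro K hK
        obtain ⟨hKS, hKc⟩ := mem_powersetCard.1 hK
        have d1 := cpoly_deg lam h S p hpS k hk1 hk2 K hKS hKc
        have d2 := cpoly_deg lam (-h) S p hpS k hk1 hk2 K hKS hKc
        have e1 : (C (gco lam h S p K) * cpoly lam h S p K).natDegree
            ≤ (cpoly lam h S p K).natDegree := natDegree_C_mul_le _ _
        have e2 : (C (gco lam (-h) S p K) * cpoly lam (-h) S p K).natDegree
            ≤ (cpoly lam (-h) S p K).natDegree := natDegree_C_mul_le _ _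
        have := natDegree_sub_le (C (gco lam h S p K) * cpoly lam h S p K)
          (C (gco lam (-h) S p K) * cpoly lam (-h) S p K)
        omega
      have := Polynomial.natDegree_sum_le_of_forall_le _ _ hbound
      rw [← hNdef] at this
      omega
    have hN0 : N = 0 := Polynomial.eq_zero_of_natDegree_lt_card_of_eval_eq_zero' N pts hevals hdeg
    -- conclude
    have hDne : Dval lam h S p ≠ 0 := by
      rw [Dval]
      refine prod_ne_zero_iff.2 fun j hj => ?_
      obtain ⟨hjp, hjS⟩ := mem_erase.1 hj
      have hpj : p ≠ j := Ne.symm hjp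
      exact mul_ne_zero (hd p hpS j hjS hpj)
        (mul_ne_zero (hph p hpS j hjS hpj) (hmh p hpS j hjS hpj))
    have hevp : eval (lam p) N = 0 := by rw [hN0, eval_zero]
    rw [hevalN (lam p)] at hevp
    have hcl1 : (∑ K ∈ S.powersetCard k, ∏ i ∈ K, ∏ j ∈ S \ K, vv lam h i j) * Dval lam h S p
        = ∑ K ∈ S.powersetCard k, gco lam h S p K * eval (lam p) (cpoly lam h S p K) := by
      rw [sum_mul]
      exact sum_congr rfl fun K hK =>
        clearing lam h S p hpS hd hph K (mem_powersetCard.1 hK).1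
    have hcl2 : (∑ K ∈ S.powersetCard k, ∏ i ∈ K, ∏ j ∈ S \ K, vv lam (-h) i j) *
          Dval lam h S p
        = ∑ K ∈ S.powersetCard k, gco lam (-h) S p K * eval (lam p) (cpoly lam (-h) S p K) := by
      rw [← Dval_neg, sum_mul]
      exact sum_congr rfl fun K hK =>
        clearing lam (-h) S p hpS hd hph' K (mem_powersetCard.1 hK).1
    have : (∑ K ∈ S.powersetCard k, ∏ i ∈ K, ∏ j ∈ S \ K, vv lam h i j) * Dval lam h S p
        = (∑ K ∈ S.powersetCard k, ∏ i ∈ K, ∏ j ∈ S \ K, vv lam (-h) i j) * Dval lam h S p := by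
      rw [hcl1, hcl2]
      exact sub_eq_zero.1 hevp
    exact mul_right_cancel₀ hDne this

end TodaAux

/-- The `a = 0` case of the subset identity (Lemma 4): for `1 ≤ k ≤ n-1`,
the sum over k-element subsets with `+h` shifts equals the one with `-h` shifts. -/
theorem toda_lemma4_a_zero (n k : ℕ) (lam : Fin n → ℂ) (h : ℂ) (hh : h ≠ 0)
    (hdist : ∀ i j : Fin n, i ≠ j → lam i ≠ lam j)
    (hp : ∀ i j : Fin n, i ≠ j → lam i - lam j + h ≠ 0)
    (hm : ∀ i j : Fin n, i ≠ j → lam i - lam j - h ≠ 0)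
    (hk1 : 1 ≤ k) (hk2 : k + 1 ≤ n) :
    ∑ K ∈ powersetCard k (univ : Finset (Fin n)),
        ∏ i ∈ K, ∏ j ∈ Kᶜ, ((lam i - lam j) * (lam i - lam j + h))⁻¹
      = ∑ K ∈ powersetCard k (univ : Finset (Fin n)),
          ∏ i ∈ K, ∏ j ∈ Kᶜ, ((lam i - lam j) * (lam i - lam j - h))⁻¹ := by
  classical
  simp only [compl_eq_univ_sdiff]
  set F : ℂ → ℂ := fun z => ∑ K ∈ powersetCard k (univ : Finset (Fin n)),
    ∏ i ∈ K, ∏ j ∈ (univ : Finset (Fin n)) \ K,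
      ((lam i - lam j) * (lam i - lam j + z))⁻¹ with hFdef
  set G : ℂ → ℂ := fun z => ∑ K ∈ powersetCard k (univ : Finset (Fin n)),
    ∏ i ∈ K, ∏ j ∈ (univ : Finset (Fin n)) \ K,
      ((lam i - lam j) * (lam i - lam j - z))⁻¹ with hGdef
  show F h = G h
  have hd : ∀ i ∈ (univ : Finset (Fin n)), ∀ j ∈ (univ : Finset (Fin n)), i ≠ j →
      lam i - lam j ≠ 0 := fun i _ j _ hij => sub_ne_zero_of_ne (hdist i j hij)
  -- the bad set
  set B : Finset ℂ := insert 0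
    (((univ : Finset (Fin n × Fin n)).filter (fun ij => ij.1 ≠ ij.2)).image
        (fun ij => lam ij.1 - lam ij.2) ∪
      ((univ : Finset (Fin n × Fin n)).filter (fun ij => ij.1 ≠ ij.2)).image
        (fun ij => (lam ij.1 - lam ij.2) / 2)) with hBdef
  have hgood : ∀ z : ℂ, z ∉ (B : Set ℂ) → F z = G z := by
    intro z hz
    simp only [hBdef, coe_insert, Set.mem_insert_iff, coe_union, Set.mem_union, coe_image,
      Set.mem_image, mem_coe, mem_filter, mem_univ, true_and] at hz
    push_neg at hz
    obtain ⟨hz0, hz1, hz2⟩ := hz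
    have hdiff : ∀ i j : Fin n, i ≠ j → lam i - lam j ≠ z := by
      intro i j hij hc
      exact hz1 (i, j) hij hc
    have hhalf : ∀ i j : Fin n, i ≠ j → (lam i - lam j) / 2 ≠ z := by
      intro i j hij hc
      exact hz2 (i, j) hij hc
    have hphz : ∀ i ∈ (univ : Finset (Fin n)), ∀ j ∈ (univ : Finset (Fin n)), i ≠ j →
        lam i - lam j + z ≠ 0 := by
      intro i _ j _ hij hc
      exact hdiff j i (Ne.symm hij) (by linear_combination -hc)
    have hmhz : ∀ i ∈ (univ : Finset (Fin n)), ∀ j ∈ (univ : Finset (Fin n)), i ≠ j →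
        lam i - lam j - z ≠ 0 := by
      intro i _ j _ hij hc
      exact hdiff i j hij (by linear_combination hc)
    have hp2z : ∀ i ∈ (univ : Finset (Fin n)), ∀ j ∈ (univ : Finset (Fin n)), i ≠ j →
        lam i - lam j + 2*z ≠ 0 := by
      intro i _ j _ hij hc
      exact hhalf j i (Ne.symm hij) (by linear_combination -hc/2)
    have hm2z : ∀ i ∈ (univ : Finset (Fin n)), ∀ j ∈ (univ : Finset (Fin n)), i ≠ j →
        lam i - lam j - 2*z ≠ 0 := by
      intro i _ j _ hij hc
      exact hhalf i j hij (by linear_combination hc/2)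
    have hcardu : (univ : Finset (Fin n)).card = n := by simp
    have := TodaAux.keyL lam z hz0 n (univ : Finset (Fin n)) (by rw [hcardu]) k
      (by rw [hcardu]; omega) hd hphz hmhz hp2z hm2z
    simp only [TodaAux.vv] at this
    rw [hFdef, hGdef]
    simp only []
    rw [this]
    refine sum_congr rfl fun K _ => prod_congr rfl fun i _ => prod_congr rfl fun j _ => ?_
    exact congrArg Inv.inv (by ring)
  -- continuity of F - G at h
  have hFc : Filter.Tendsto F (nhds h) (nhds (F h)) := by
    rw [hFdef]
    apply tendsto_finset_sum
    intro K hK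
    apply tendsto_finset_prod
    intro i hi
    apply tendsto_finset_prod
    intro j hj
    have hij : i ≠ j := fun hc => (mem_sdiff.1 hj).2 (hc ▸ hi)
    refine Filter.Tendsto.inv₀ ?_ ?_
    · exact tendsto_const_nhds.mul (tendsto_const_nhds.add Filter.tendsto_id)
    · exact mul_ne_zero (sub_ne_zero_of_ne (hdist i j hij)) (hp i j hij)
  have hGc : Filter.Tendsto G (nhds h) (nhds (G h)) := by
    rw [hGdef]
    apply tendsto_finset_sum
    intro K hK
    apply tendsto_finset_prod
    intro i hi
    apply tendsto_finset_prod
    intro j hj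
    have hij : i ≠ j := fun hc => (mem_sdiff.1 hj).2 (hc ▸ hi)
    refine Filter.Tendsto.inv₀ ?_ ?_
    · exact tendsto_const_nhds.mul (tendsto_const_nhds.sub Filter.tendsto_id)
    · exact mul_ne_zero (sub_ne_zero_of_ne (hdist i j hij)) (hm i j hij)
  have h1 : Filter.Tendsto (fun z => F z - G z) (nhdsWithin h {h}ᶜ) (nhds (F h - G h)) :=
    (hFc.sub hGc).mono_left nhdsWithin_le_nhds
  have hBe : h ∉ (B.erase h) := notMem_erase h B
  have hUopen : IsOpen ((↑(B.erase h) : Set ℂ))ᶜ :=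
    (B.erase h).finite_toSet.isClosed.isOpen_compl
  have hU : ((↑(B.erase h) : Set ℂ))ᶜ ∈ nhds h := hUopen.mem_nhds (by simpa using hBe)
  have h2 : (fun z => F z - G z) =ᶠ[nhdsWithin h {h}ᶜ] fun _ => (0 : ℂ) := by
    filter_upwards [mem_nhdsWithin_of_mem_nhds hU, self_mem_nhdsWithin] with z hzU hzne
    have hzB : z ∉ (B : Set ℂ) := by
      intro hzB
      apply hzU
      simp only [Finset.coe_erase, Set.mem_diff, Set.mem_singleton_iff]
      exact ⟨by simpa using hzB, hzne⟩
    rw [hgood z hzB, sub_self]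
  have h3 : Filter.Tendsto (fun z => F z - G z) (nhdsWithin h {h}ᶜ) (nhds 0) :=
    (Filter.tendsto_congr' h2).2 tendsto_const_nhds
  have hzero : F h - G h = 0 := tendsto_nhds_unique h1 h3
  exact sub_eq_zero.1 hzero
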